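/- C_{Δ,max} is quasiconvex: for any finite family of states ρ_i and probability weights p_i (p_i ≥ 0, Σ_i p_i = 1), one has C_{Δ,max}(Σ_i p_i ρ_i) ≤ max_i C_{Δ,max}(ρ_i). -/

import Mathlib

open scoped Matrix ComplexOrder

namespace OneShot

variable {ι κ : Type*} [Fintype ι] [DecidableEq ι] [Fintype κ] [DecidableEq κ]

/-- A quantum state: a positive semidefinite matrix with unit trace. -/
def IsState (ρ : Matrix ι ι ℂ) : Prop := ρ.PosSemidef ∧ ρ.trace = 1

/-- An incoherent state: a state that is diagonal in the computational basis. -/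
def IsIncoherent (ρ : Matrix ι ι ℂ) : Prop := IsState ρ ∧ ρ.IsDiag

/-- The completely dephasing channel `Δ`. -/
def dephase (ρ : Matrix ι ι ℂ) : Matrix ι ι ℂ := Matrix.diagonal fun i => ρ i i

/-- The max-relative entropy of coherence
`C_max(ρ) = min_{δ ∈ 𝓘} D_max(ρ‖δ) = log₂ min {λ ≥ 0 | ∃ δ ∈ 𝓘, ρ ≤ λ δ}`. -/
noncomputable def Cmax (ρ : Matrix ι ι ℂ) : ℝ :=
  Real.logb 2 (sInf {l : ℝ | 0 ≤ l ∧ ∃ δ, IsIncoherent δ ∧ (l • δ - ρ).PosSemidef})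

/-- `C_{Δ,max}(ρ) = log₂ min {λ ≥ 0 | ρ ≤ λ Δ(ρ)}`. -/
noncomputable def CDmax (ρ : Matrix ι ι ℂ) : ℝ :=
  Real.logb 2 (sInf {l : ℝ | 0 ≤ l ∧ (l • dephase ρ - ρ).PosSemidef})

/-- Complete positivity of a linear map on matrices. -/
def CompletelyPositive (Λ : Matrix ι ι ℂ →ₗ[ℂ] Matrix κ κ ℂ) : Prop :=
  ∀ (k : ℕ) (M : Matrix (Fin k × ι) (Fin k × ι) ℂ), M.PosSemidef →
    (Matrix.of fun p q : Fin k × κ =>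
      Λ (Matrix.of fun x y => M (p.1, x) (q.1, y)) p.2 q.2).PosSemidef

/-- Trace preservation. -/
def TracePreserving (Λ : Matrix ι ι ℂ →ₗ[ℂ] Matrix κ κ ℂ) : Prop :=
  ∀ A, (Λ A).trace = A.trace

/-- A maximally incoherent operation (MIO): a CPTP map sending every incoherent state
to an incoherent state. -/
def IsMIO (Λ : Matrix ι ι ℂ →ₗ[ℂ] Matrix κ κ ℂ) : Prop :=
  CompletelyPositive Λ ∧ TracePreserving Λ ∧ ∀ δ, IsIncoherent δ → IsIncoherent (Λ δ)

/-- A dephasing-covariant incoherent operation (DIO): a CPTP map commuting with `Δ`. -/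
def IsDIO (Λ : Matrix ι ι ℂ →ₗ[ℂ] Matrix ι ι ℂ) : Prop :=
  CompletelyPositive Λ ∧ TracePreserving Λ ∧ ∀ ρ, Λ (dephase ρ) = dephase (Λ ρ)

/-- An incoherent-preserving (Kraus) operator: `K δ Kᴴ` is a nonnegative multiple of an
incoherent state, for every incoherent state `δ`. -/
def IncoherentPreserving (K : Matrix κ ι ℂ) : Prop :=
  ∀ δ : Matrix ι ι ℂ, IsIncoherent δ →
    ∃ c : ℝ, 0 ≤ c ∧ ∃ δ' : Matrix κ κ ℂ, IsIncoherent δ' ∧ K * δ * Kᴴ = (c : ℂ) • δ'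

/-- An incoherent operation (IO). -/
def IsIO (Λ : Matrix ι ι ℂ →ₗ[ℂ] Matrix κ κ ℂ) : Prop :=
  ∃ (N : ℕ) (K : Fin N → Matrix κ ι ℂ),
    (∀ n, IncoherentPreserving (K n)) ∧ (∑ n, (K n)ᴴ * K n = 1) ∧
    ∀ ρ, Λ ρ = ∑ n, K n * ρ * (K n)ᴴ

/-- A strictly incoherent operation (SIO). -/
def IsSIO (Λ : Matrix ι ι ℂ →ₗ[ℂ] Matrix κ κ ℂ) : Prop :=
  ∃ (N : ℕ) (K : Fin N → Matrix κ ι ℂ),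
    (∀ n, IncoherentPreserving (K n)) ∧ (∀ n, IncoherentPreserving (K n)ᴴ) ∧
    (∑ n, (K n)ᴴ * K n = 1) ∧ ∀ ρ, Λ ρ = ∑ n, K n * ρ * (K n)ᴴ

/-- The outer product `|ψ⟩⟨ψ|`. -/
def outer (ψ : ι → ℂ) : Matrix ι ι ℂ := Matrix.of fun i j => ψ i * star (ψ j)

/-- `T ψ` is the number of nonzero computational-basis coefficients of `ψ`. -/
noncomputable def T (ψ : ι → ℂ) : ℕ := (Finset.univ.filter fun i => ψ i ≠ 0).card

/-- A finite pure-state decomposition `ρ = Σ_j p_j |ψ_j⟩⟨ψ_j|`. -/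
def IsDecomposition (ρ : Matrix ι ι ℂ) (n : ℕ) (p : Fin n → ℝ) (ψ : Fin n → ι → ℂ) : Prop :=
  (∀ j, 0 < p j) ∧ (∑ j, p j = 1) ∧ (∀ j, ∑ i, Complex.normSq (ψ j i) = 1) ∧
    ρ = ∑ j, p j • outer (ψ j)

/-- `C_0(ρ) = min over decompositions of max_j log₂ T(ψ_j)`. -/
noncomputable def C0 (ρ : Matrix ι ι ℂ) : ℝ :=
  sInf { r | ∃ n p ψ, IsDecomposition ρ n p ψ ∧
    r = Real.logb 2 (↑(Finset.univ.sup fun j => T (ψ j)) : ℝ) }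

/-- Matrix square root of a positive semidefinite matrix (junk value `0` elsewhere). -/
noncomputable def msqrt (A : Matrix ι ι ℂ) : Matrix ι ι ℂ :=
  letI := Classical.propDecidable A.PosSemidef
  if h : A.PosSemidef then
    (h.1.eigenvectorUnitary : Matrix ι ι ℂ) *
      Matrix.diagonal ((↑) ∘ (fun x : ℝ => Real.sqrt x) ∘ h.1.eigenvalues) *
      (star h.1.eigenvectorUnitary : Matrix ι ι ℂ)
  else 0

/-- Uhlmann fidelity `F(ρ,σ) = (Tr √(√ρ σ √ρ))²`. -/
noncomputable def Fid (ρ σ : Matrix ι ι ℂ) : ℝ :=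
  ((msqrt (msqrt ρ * σ * msqrt ρ)).trace.re) ^ 2

/-- Smoothed `C_max`. -/
noncomputable def Cmaxeps (ρ : Matrix ι ι ℂ) (ε : ℝ) : ℝ :=
  sInf { r | ∃ ρ', IsState ρ' ∧ 1 - ε ≤ Fid ρ ρ' ∧ r = Cmax ρ' }

/-- Smoothed `C_{Δ,max}`. -/
noncomputable def CDmaxeps (ρ : Matrix ι ι ℂ) (ε : ℝ) : ℝ :=
  sInf { r | ∃ ρ', IsState ρ' ∧ 1 - ε ≤ Fid ρ ρ' ∧ r = CDmax ρ' }

/-- Smoothed `C_0`. -/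
noncomputable def C0eps (ρ : Matrix ι ι ℂ) (ε : ℝ) : ℝ :=
  sInf { r | ∃ ρ', IsState ρ' ∧ 1 - ε ≤ Fid ρ ρ' ∧ r = C0 ρ' }

/-- The maximally coherent state `Ψ_M = |Ψ_M⟩⟨Ψ_M|` of dimension `M`. -/
noncomputable def PsiM (M : ℕ) : Matrix (Fin M) (Fin M) ℂ := Matrix.of fun _ _ => (1 : ℂ) / M

/-- One-shot coherence cost under MIO. -/
noncomputable def CMIOeps (ρ : Matrix ι ι ℂ) (ε : ℝ) : ℝ :=
  sInf { r | ∃ M : ℕ, 1 ≤ M ∧ r = Real.logb 2 M ∧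
    ∃ Λ : Matrix (Fin M) (Fin M) ℂ →ₗ[ℂ] Matrix ι ι ℂ, IsMIO Λ ∧ 1 - ε ≤ Fid ρ (Λ (PsiM M)) }

/-- One-shot coherence cost under DIO. -/
noncomputable def CDIOeps (ρ : Matrix ι ι ℂ) (ε : ℝ) : ℝ :=
  sInf { r | ∃ M : ℕ, 1 ≤ M ∧ r = Real.logb 2 M ∧
    ∃ Λ : Matrix (Fin M) (Fin M) ℂ →ₗ[ℂ] Matrix ι ι ℂ,
      CompletelyPositive Λ ∧ TracePreserving Λ ∧ (∀ ω, Λ (dephase ω) = dephase (Λ ω)) ∧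
      1 - ε ≤ Fid ρ (Λ (PsiM M)) }

/-- One-shot coherence cost under IO. -/
noncomputable def CIOeps (ρ : Matrix ι ι ℂ) (ε : ℝ) : ℝ :=
  sInf { r | ∃ M : ℕ, 1 ≤ M ∧ r = Real.logb 2 M ∧
    ∃ Λ : Matrix (Fin M) (Fin M) ℂ →ₗ[ℂ] Matrix ι ι ℂ, IsIO Λ ∧ 1 - ε ≤ Fid ρ (Λ (PsiM M)) }

/-- One-shot coherence cost under SIO. -/
noncomputable def CSIOeps (ρ : Matrix ι ι ℂ) (ε : ℝ) : ℝ :=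
  sInf { r | ∃ M : ℕ, 1 ≤ M ∧ r = Real.logb 2 M ∧
    ∃ Λ : Matrix (Fin M) (Fin M) ℂ →ₗ[ℂ] Matrix ι ι ℂ, IsSIO Λ ∧ 1 - ε ≤ Fid ρ (Λ (PsiM M)) }

/-- Matrix logarithm (base 2) via the spectral decomposition, with `log₂ 0 = 0` junk
convention on the kernel, and junk value `0` on non-Hermitian matrices. -/
noncomputable def mlog2 (A : Matrix ι ι ℂ) : Matrix ι ι ℂ :=
  letI := Classical.propDecidable A.IsHermitian
  if h : A.IsHermitian then
    (h.eigenvectorUnitary : Matrix ι ι ℂ) *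
      Matrix.diagonal (fun i => (Real.logb 2 (h.eigenvalues i) : ℂ)) *
      (h.eigenvectorUnitary : Matrix ι ι ℂ)ᴴ
  else 0

/-- The relative entropy of coherence `C_r(ρ) = min_{δ ∈ 𝓘} S(ρ‖δ)`, where the minimum
is (equivalently) restricted to those `δ` whose support contains the support of `ρ`,
on which `S(ρ‖δ) = Tr[ρ (log₂ ρ − log₂ δ)]` is finite. -/
noncomputable def Cr (ρ : Matrix ι ι ℂ) : ℝ :=
  sInf { r | ∃ δ, IsIncoherent δ ∧ (∀ v : ι → ℂ, δ.mulVec v = 0 → ρ.mulVec v = 0) ∧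
    r = ((ρ * (mlog2 ρ - mlog2 δ)).trace).re }

/-- Von Neumann entropy (base 2). -/
noncomputable def vN (σ : Matrix ι ι ℂ) : ℝ := -((σ * mlog2 σ).trace.re)

/-- The coherence of formation. -/
noncomputable def Cf (ρ : Matrix ι ι ℂ) : ℝ :=
  sInf { r | ∃ n p ψ, IsDecomposition ρ n p ψ ∧
    r = ∑ j, p j * vN (dephase (outer (ψ j))) }

/-- The set `A_ρ = { (1/t)[(1+t)Δ(ρ) − ρ] : t > 0, (1+t)Δ(ρ) − ρ ≥ 0 }`. -/
def Aset (ρ : Matrix ι ι ℂ) : Set (Matrix ι ι ℂ) :=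
  { σ | ∃ t : ℝ, 0 < t ∧ ((1 + t) • dephase ρ - ρ).PosSemidef ∧
      σ = t⁻¹ • ((1 + t) • dephase ρ - ρ) }

/-- The `n`-fold tensor power `ρ^{⊗ n}`. -/
def tpow (ρ : Matrix ι ι ℂ) (n : ℕ) : Matrix (Fin n → ι) (Fin n → ι) ℂ :=
  Matrix.of fun i j => ∏ t, ρ (i t) (j t)

section MainHelpers

variable {ι : Type*} [Fintype ι] [DecidableEq ι]

omit [Fintype ι] in
omit [DecidableEq ι] in
lemma isHermitian_real_smul (c : ℝ) {A : Matrix ι ι ℂ} (hA : A.IsHermitian) :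
    (c • A).IsHermitian := by
  unfold Matrix.IsHermitian
  rw [Matrix.conjTranspose_smul, hA.eq, star_trivial]

lemma posSemidef_real_smul {c : ℝ} (hc : 0 ≤ c) {A : Matrix ι ι ℂ} (hA : A.PosSemidef) :
    (c • A).PosSemidef := by
  refine Matrix.PosSemidef.of_dotProduct_mulVec_nonneg (isHermitian_real_smul c hA.1) fun x => ?_
  rw [Matrix.smul_mulVec, dotProduct_smul, Complex.real_smul]
  exact mul_nonneg (by exact_mod_cast hc) (hA.dotProduct_mulVec_nonneg x)

lemma diag_nonneg {A : Matrix ι ι ℂ} (hA : A.PosSemidef) (i : ι) : 0 ≤ A i i := by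
  exact hA.diag_nonneg

lemma dephase_posSemidef {A : Matrix ι ι ℂ} (hA : A.PosSemidef) : (dephase A).PosSemidef :=
  Matrix.posSemidef_diagonal_iff.mpr fun i => diag_nonneg hA i

lemma trace_nonneg' {A : Matrix ι ι ℂ} (hA : A.PosSemidef) : 0 ≤ A.trace := by
  rw [Matrix.trace]
  exact Finset.sum_nonneg fun i _ => diag_nonneg hA i

omit [Fintype ι] in
lemma dephase_sum_smul {n : ℕ} (p : Fin n → ℝ) (ρ : Fin n → Matrix ι ι ℂ) :
    dephase (∑ i, p i • ρ i) = ∑ i, p i • dephase (ρ i) := by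
  unfold dephase
  ext j k
  by_cases h : j = k <;>
    simp [Matrix.diagonal_apply, h, Matrix.sum_apply]

open scoped MatrixOrder in
lemma card_smul_dephase_sub_posSemidef {A : Matrix ι ι ℂ} (hA : A.PosSemidef) :
    ((Fintype.card ι : ℝ) • dephase A - A).PosSemidef := by
  have hdh : (dephase A).IsHermitian := by
    refine Matrix.isHermitian_diagonal_of_self_adjoint _ (funext fun i => ?_)
    exact hA.1.apply i i
  refine Matrix.PosSemidef.of_dotProduct_mulVec_nonneg
    ((isHermitian_real_smul _ hdh).sub hA.1) fun x => ?_
  set B := CFC.sqrt A with hB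
  have hBB : B * B = A := CFC.sqrt_mul_sqrt_self A hA.nonneg
  have hBH : B.IsHermitian := (Matrix.nonneg_iff_posSemidef.mp (CFC.sqrt_nonneg A)).1
  have hAe : ∀ i k, A i k = ∑ j, (starRingEnd ℂ) (B j i) * B j k := by
    intro i k
    rw [← hBB, Matrix.mul_apply]
    refine Finset.sum_congr rfl fun j _ => ?_
    rw [← hBH.apply j i, starRingEnd_apply, star_star]
  have h2 : star x ⬝ᵥ (A *ᵥ x) =
      ((∑ j, Complex.normSq (∑ i, B j i * x i) : ℝ) : ℂ) := by
    have hy : star x ⬝ᵥ (A *ᵥ x) = star (B *ᵥ x) ⬝ᵥ (B *ᵥ x) := by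
      rw [← hBB, ← Matrix.mulVec_mulVec, Matrix.dotProduct_mulVec]
      conv_lhs => rw [← hBH.eq]
      rw [← Matrix.star_mulVec, hBH.eq]
    rw [hy]
    push_cast [Complex.normSq_eq_conj_mul_self]
    simp [dotProduct, Matrix.mulVec, Complex.star_def]
  have h1 : star x ⬝ᵥ (dephase A *ᵥ x) =
      ((∑ j, ∑ i, Complex.normSq (B j i * x i) : ℝ) : ℂ) := by
    push_cast [Complex.normSq_mul, Complex.normSq_eq_conj_mul_self]
    simp only [dephase, dotProduct, Matrix.mulVec_diagonal, Pi.star_apply,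
      Complex.star_def]
    rw [Finset.sum_comm]
    refine Finset.sum_congr rfl fun i _ => ?_
    rw [hAe i i, Finset.sum_mul, Finset.mul_sum]
    refine Finset.sum_congr rfl fun j _ => ?_
    ring
  have key : ∀ j, Complex.normSq (∑ i, B j i * x i) ≤
      (Fintype.card ι : ℝ) * ∑ i, Complex.normSq (B j i * x i) := by
    intro j
    have habs : ‖∑ i, B j i * x i‖ ≤ ∑ i, ‖B j i * x i‖ :=
      norm_sum_le _ _
    have hsq : (∑ i, ‖B j i * x i‖) ^ 2 ≤
        (Fintype.card ι : ℝ) * ∑ i, ‖B j i * x i‖ ^ 2 := by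
      simpa using sq_sum_le_card_mul_sum_sq (s := Finset.univ)
        (f := fun i => ‖B j i * x i‖)
    calc Complex.normSq (∑ i, B j i * x i)
        = ‖∑ i, B j i * x i‖ ^ 2 := (Complex.sq_norm _).symm
      _ ≤ (∑ i, ‖B j i * x i‖) ^ 2 := by
          exact pow_le_pow_left₀ (norm_nonneg _) habs 2
      _ ≤ (Fintype.card ι : ℝ) * ∑ i, ‖B j i * x i‖ ^ 2 := hsq
      _ = (Fintype.card ι : ℝ) * ∑ i, Complex.normSq (B j i * x i) := by
          congr 1
          refine Finset.sum_congr rfl fun i _ => ?_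
          rw [Complex.sq_norm]
  have hexp : star x ⬝ᵥ (((Fintype.card ι : ℝ) • dephase A - A) *ᵥ x) =
      (((Fintype.card ι : ℝ) * (∑ j, ∑ i, Complex.normSq (B j i * x i)) -
        ∑ j, Complex.normSq (∑ i, B j i * x i) : ℝ) : ℂ) := by
    rw [Matrix.sub_mulVec, dotProduct_sub, Matrix.smul_mulVec,
      dotProduct_smul, h1, h2, Complex.real_smul]
    push_cast
    ring
  rw [hexp, Complex.zero_le_real]
  rw [sub_nonneg, Finset.mul_sum]
  exact Finset.sum_le_sum fun j _ => key j

end MainHelpers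

/-- `C_{Δ,max}` is quasiconvex. -/
theorem CDmax_quasiconvex {d : ℕ} (n : ℕ) (hn : 0 < n) (p : Fin n → ℝ)
    (ρ : Fin n → Matrix (Fin d) (Fin d) ℂ)
    (hp : ∀ i, 0 ≤ p i) (hp1 : ∑ i, p i = 1) (hρ : ∀ i, IsState (ρ i)) :
    CDmax (∑ i, p i • ρ i) ≤
      Finset.univ.sup' ⟨⟨0, hn⟩, Finset.mem_univ _⟩ (fun i => CDmax (ρ i)) := by
  classical
  have hne : (Finset.univ : Finset (Fin n)).Nonempty := ⟨⟨0, hn⟩, Finset.mem_univ _⟩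
  set S : Matrix (Fin d) (Fin d) ℂ → Set ℝ :=
    fun σ => {l : ℝ | 0 ≤ l ∧ (l • dephase σ - σ).PosSemidef} with hSdef
  have hCD : ∀ σ : Matrix (Fin d) (Fin d) ℂ, CDmax σ = Real.logb 2 (sInf (S σ)) := fun _ => rfl
  -- basic facts about S
  have hbdd : ∀ σ, BddBelow (S σ) := fun σ => ⟨0, fun l hl => hl.1⟩
  have hmemd : ∀ σ : Matrix (Fin d) (Fin d) ℂ, σ.PosSemidef → (Fintype.card (Fin d) : ℝ) ∈ S σ :=
    fun σ h => ⟨Nat.cast_nonneg _, card_smul_dephase_sub_posSemidef h⟩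
  have hup : ∀ (σ : Matrix (Fin d) (Fin d) ℂ), σ.PosSemidef →
      ∀ l l', l ∈ S σ → l ≤ l' → l' ∈ S σ := by
    intro σ hσ l l' hl hle
    refine ⟨hl.1.trans hle, ?_⟩
    have hsplit : l' • dephase σ - σ = (l • dephase σ - σ) + (l' - l) • dephase σ := by
      rw [sub_smul]; abel
    rw [hsplit]
    exact hl.2.add (posSemidef_real_smul (by linarith) (dephase_posSemidef hσ))
  -- every element of S of a state is ≥ 1
  have hone : ∀ σ : Matrix (Fin d) (Fin d) ℂ, IsState σ → ∀ l ∈ S σ, (1 : ℝ) ≤ l := by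
    intro σ hσ l hl
    have htr : (l • dephase σ - σ).trace = ((l - 1 : ℝ) : ℂ) := by
      rw [Matrix.trace_sub, Matrix.trace_smul]
      have : (dephase σ).trace = σ.trace := by
        simp [dephase, Matrix.trace_diagonal, Matrix.trace]
      rw [this, hσ.2]
      push_cast
      simp [Complex.real_smul]
    have h0 : (0 : ℂ) ≤ ((l - 1 : ℝ) : ℂ) := htr ▸ trace_nonneg' hl.2
    rw [Complex.zero_le_real] at h0
    linarith
  -- the mixture is a state
  set ρbar := ∑ i, p i • ρ i with hρbar
  have hρbarpsd : ρbar.PosSemidef := by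
    refine Finset.sum_induction _ _ (fun a b ha hb => ha.add hb) Matrix.PosSemidef.zero ?_
    exact fun i _ => posSemidef_real_smul (hp i) (hρ i).1
  have hρbartr : ρbar.trace = 1 := by
    rw [hρbar, Matrix.trace_sum]
    have : ∀ i, (p i • ρ i).trace = ((p i : ℝ) : ℂ) := by
      intro i
      rw [Matrix.trace_smul, (hρ i).2]
      simp [Complex.real_smul]
    simp only [this]
    push_cast
    exact_mod_cast congrArg (fun t : ℝ => (t : ℂ)) hp1
  -- the sup of the infima
  set m : ℝ := Finset.univ.sup' hne (fun i => sInf (S (ρ i))) with hm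
  have key : ∀ ε : ℝ, 0 < ε → ∃ l ∈ S ρbar, l ≤ m + ε := by
    intro ε hε
    have h1 : ∀ i, ∃ l ∈ S (ρ i), l < sInf (S (ρ i)) + ε := fun i =>
      exists_lt_of_csInf_lt ⟨_, hmemd _ (hρ i).1⟩ (lt_add_of_pos_right _ hε)
    choose f hf1 hf2 using h1
    set l : ℝ := Finset.univ.sup' hne f with hl
    have hfl : ∀ i, f i ≤ l := fun i => Finset.le_sup' f (Finset.mem_univ i)
    have hmem : ∀ i, l ∈ S (ρ i) := fun i => hup _ (hρ i).1 _ _ (hf1 i) (hfl i)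
    refine ⟨l, ⟨(hf1 ⟨0, hn⟩).1.trans (hfl ⟨0, hn⟩), ?_⟩, ?_⟩
    · have hsplit : l • dephase ρbar - ρbar = ∑ i, p i • (l • dephase (ρ i) - ρ i) := by
        rw [hρbar, dephase_sum_smul, Finset.smul_sum, ← Finset.sum_sub_distrib]
        refine Finset.sum_congr rfl fun i _ => ?_
        rw [smul_sub, smul_comm]
      rw [hsplit]
      refine Finset.sum_induction _ _ (fun a b ha hb => ha.add hb) Matrix.PosSemidef.zero ?_
      exact fun i _ => posSemidef_real_smul (hp i) (hmem i).2
    · refine Finset.sup'_le _ _ fun i _ => ?_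
      have : sInf (S (ρ i)) ≤ m := by
        rw [hm]; exact Finset.le_sup' (fun i => sInf (S (ρ i))) (Finset.mem_univ i)
      linarith [hf2 i]
  have hSne : (S ρbar).Nonempty := by
    obtain ⟨l, hl, -⟩ := key 1 one_pos
    exact ⟨l, hl⟩
  have hinf_le : sInf (S ρbar) ≤ m := by
    refine le_of_forall_pos_le_add fun ε hε => ?_
    obtain ⟨l, hl, hlm⟩ := key ε hε
    exact (csInf_le (hbdd _) hl).trans hlm
  have hpos : (0 : ℝ) < sInf (S ρbar) :=
    lt_of_lt_of_le one_pos (le_csInf hSne (hone ρbar ⟨hρbarpsd, hρbartr⟩))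
  obtain ⟨i0, -, hi0⟩ := Finset.exists_mem_eq_sup' hne (fun i => sInf (S (ρ i)))
  calc CDmax ρbar = Real.logb 2 (sInf (S ρbar)) := hCD _
    _ ≤ Real.logb 2 m := Real.logb_le_logb_of_le one_lt_two hpos hinf_le
    _ = CDmax (ρ i0) := by rw [hCD, hm, hi0]
    _ ≤ Finset.univ.sup' hne (fun i => CDmax (ρ i)) :=
        Finset.le_sup' (fun i => CDmax (ρ i)) (Finset.mem_univ i0)


end OneShot
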